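/- Let g : [0,∞) → ℝ be differentiable and nonnegative with g' ≥ −(1/2)a(t)·g − (1/2)a(t) where a(t) = L₀² e^{−2βt} for constants L₀, β > 0. If g(0) > (L₀²/(4β)) · exp(L₀²/(4β)), then g(t) > 0 for all t ≥ 0. -/

import Mathlib

/-- ODE comparison behind embeddedness preservation: if `g ≥ 0` is differentiable
with `g' ≥ −(1/2)a(t)g − (1/2)a(t)`, `a(t) = L₀²e^{−2βt}` (`L₀, β > 0`), and
`g(0) > (L₀²/(4β))·exp(L₀²/(4β))`, then `g(t) > 0` for all `t ≥ 0`. -/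
theorem chord_arc_positivity
    (L₀ β : ℝ) (hL₀ : 0 < L₀) (hβ : 0 < β)
    (g g' : ℝ → ℝ)
    (hg : ∀ t, HasDerivAt g (g' t) t)
    (hnn : ∀ t ≥ 0, 0 ≤ g t)
    (hineq : ∀ t ≥ 0,
      -(1 / 2) * (L₀ ^ 2 * Real.exp (-2 * β * t)) * g t
        - (1 / 2) * (L₀ ^ 2 * Real.exp (-2 * β * t)) ≤ g' t)
    (h0 : g 0 > (L₀ ^ 2 / (4 * β)) * Real.exp (L₀ ^ 2 / (4 * β))) :
    ∀ t ≥ 0, 0 < g t := by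
  set C : ℝ := L₀ ^ 2 / (4 * β) with hCdef
  have hCpos : 0 < C := by positivity
  set A : ℝ → ℝ := fun t => C * (1 - Real.exp (-2 * β * t)) with hAdef
  set G : ℝ → ℝ := fun t =>
    Real.exp (A t) * g t + Real.exp C * C * (1 - Real.exp (-2 * β * t)) with hGdef
  have hEderiv : ∀ t : ℝ, HasDerivAt (fun s => Real.exp (-2 * β * s))
      (-2 * β * Real.exp (-2 * β * t)) t := by
    intro t
    have h1 : HasDerivAt (fun s : ℝ => -2 * β * s) (-2 * β) t := by
      simpa using (hasDerivAt_id t).const_mul (-2 * β)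
    simpa [mul_comm] using h1.exp
  have hAderiv : ∀ t : ℝ, HasDerivAt A (C * (2 * β * Real.exp (-2 * β * t))) t := by
    intro t
    have h3 : HasDerivAt (fun s => 1 - Real.exp (-2 * β * s))
        (2 * β * Real.exp (-2 * β * t)) t := by
      have : HasDerivAt (fun s => 1 - Real.exp (-2 * β * s)) (0 - -2 * β * Real.exp (-2 * β * t)) t :=
        (hasDerivAt_const t (1 : ℝ)).sub (hEderiv t)
      convert this using 1; ring
    exact h3.const_mul C
  have hGderiv : ∀ t : ℝ, HasDerivAt G
      (Real.exp (A t) * (C * (2 * β * Real.exp (-2 * β * t))) * g t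
        + Real.exp (A t) * g' t + Real.exp C * C * (2 * β * Real.exp (-2 * β * t))) t := by
    intro t
    have h1 : HasDerivAt (fun s => Real.exp (A s))
        (Real.exp (A t) * (C * (2 * β * Real.exp (-2 * β * t)))) t := (hAderiv t).exp
    have h2 := (h1.mul (hg t))
    have h3 : HasDerivAt (fun s => Real.exp C * C * (1 - Real.exp (-2 * β * s)))
        (Real.exp C * C * (2 * β * Real.exp (-2 * β * t))) t := by
      have h4 : HasDerivAt (fun s => 1 - Real.exp (-2 * β * s))
          (2 * β * Real.exp (-2 * β * t)) t := by
        have : HasDerivAt (fun s => 1 - Real.exp (-2 * β * s)) (0 - -2 * β * Real.exp (-2 * β * t)) t :=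
        (hasDerivAt_const t (1 : ℝ)).sub (hEderiv t)
        convert this using 1; ring
      exact h4.const_mul (Real.exp C * C)
    exact (h2.add h3)
  have hAle : ∀ t ≥ (0:ℝ), A t ≤ C := by
    intro t ht
    have : 0 ≤ Real.exp (-2 * β * t) := (Real.exp_pos _).le
    have h1 : 1 - Real.exp (-2 * β * t) ≤ 1 := by linarith
    calc A t = C * (1 - Real.exp (-2 * β * t)) := rfl
      _ ≤ C * 1 := by nlinarith
      _ = C := by ring
  have hderiv_nonneg : ∀ t ≥ (0:ℝ), 0 ≤
      Real.exp (A t) * (C * (2 * β * Real.exp (-2 * β * t))) * g t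
        + Real.exp (A t) * g' t + Real.exp C * C * (2 * β * Real.exp (-2 * β * t)) := by
    intro t ht
    have hiq := hineq t ht
    have hgt := hnn t ht
    have hE : Real.exp (A t) ≤ Real.exp C := Real.exp_le_exp.2 (hAle t ht)
    have hEpos : 0 < Real.exp (A t) := Real.exp_pos _
    have hepos : 0 < Real.exp (-2 * β * t) := Real.exp_pos _
    have hC2 : C * (2 * β) = L₀ ^ 2 / 2 := by
      rw [hCdef]; field_simp; ring
    have hre : C * (2 * β * Real.exp (-2 * β * t))
        = (1 / 2) * (L₀ ^ 2 * Real.exp (-2 * β * t)) := by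
      linear_combination Real.exp (-2 * β * t) * hC2
    -- exp(A t) * (g' + (1/2) L₀² e g) ≥ - exp(A t) * (1/2) L₀² e
    have key : -(Real.exp (A t)) * ((1/2) * (L₀^2 * Real.exp (-2*β*t))) ≤
        Real.exp (A t) * (C * (2 * β * Real.exp (-2 * β * t))) * g t
          + Real.exp (A t) * g' t := by
      have h1 : -(1 / 2) * (L₀ ^ 2 * Real.exp (-2 * β * t)) * g t
          - (1 / 2) * (L₀ ^ 2 * Real.exp (-2 * β * t)) ≤ g' t := hiq
      have h2 := mul_le_mul_of_nonneg_left h1 hEpos.le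
      rw [hre]
      nlinarith [h2]
    have h3 : Real.exp (A t) * ((1/2) * (L₀^2 * Real.exp (-2*β*t)))
        ≤ Real.exp C * C * (2 * β * Real.exp (-2 * β * t)) := by
      have heq : Real.exp C * C * (2 * β * Real.exp (-2 * β * t))
          = Real.exp C * ((1/2) * (L₀^2 * Real.exp (-2*β*t))) := by
        linear_combination Real.exp C * Real.exp (-2 * β * t) * hC2
      rw [heq]
      have hX : 0 ≤ (1/2) * (L₀^2 * Real.exp (-2*β*t)) := by positivity
      exact mul_le_mul_of_nonneg_right hE hX
    linarith
  have hmono : MonotoneOn G (Set.Ici 0) := by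
    apply monotoneOn_of_deriv_nonneg (convex_Ici 0)
    · exact fun t _ => ((hGderiv t).continuousAt).continuousWithinAt
    · intro t ht
      exact ((hGderiv t).differentiableAt).differentiableWithinAt
    · intro t ht
      rw [(hGderiv t).deriv]
      have ht' : (0:ℝ) ≤ t := by
        rw [interior_Ici] at ht; exact le_of_lt ht
      exact hderiv_nonneg t ht'
  intro t ht
  have hG0 : G 0 = g 0 := by simp [hGdef, hAdef]
  have hle : G 0 ≤ G t := hmono (Set.self_mem_Ici) ht ht
  have hEtpos : 0 < Real.exp (-2 * β * t) := Real.exp_pos _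
  have hterm : Real.exp C * C * (1 - Real.exp (-2 * β * t)) < Real.exp C * C := by
    nlinarith [mul_pos (mul_pos (Real.exp_pos C) hCpos) hEtpos]
  have h0' : C * Real.exp C < g 0 := h0
  have : 0 < Real.exp (A t) * g t := by
    have hGt : g 0 ≤ Real.exp (A t) * g t + Real.exp C * C * (1 - Real.exp (-2 * β * t)) := by
      rw [hG0] at hle; exact hle
    linarith
  have hEA : 0 < Real.exp (A t) := Real.exp_pos _
  nlinarith
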